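/- arXiv:2510.16535 — 3 statements merged into one kernel-verified Lean document; each statement's English description precedes it below -/
import Mathlib

section
/- Let V and W be real inner product spaces, let Vₕ ⊆ V be a subspace, let G : V →ₗ W be a linear map, and suppose the inverse inequality ‖G v‖ ≤ (C/h)·‖v‖ holds for all v ∈ Vₕ, with constants C > 0 and h > 0. Let Δt > 0 and suppose e, e' ∈ Vₕ satisfy the error equation ⟨e, v⟩ + Δt·⟨G e', G v⟩ = 0 for all v ∈ Vₕ. Then (1 - C²Δt/(2h²))·‖e‖² ≤ (C²Δt/(2h²))·‖e'‖². -/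
/-- Abstract error estimate for the implicitization iteration of
the semidiscrete heat equation: if the inverse inequality
`‖G v‖ ≤ (C/h)‖v‖` holds on `Vₕ` and `⟨e, v⟩ + Δt⟨G e', G v⟩ = 0` for all
`v ∈ Vₕ`, then `(1 - C²Δt/(2h²))‖e‖² ≤ (C²Δt/(2h²))‖e'‖²`. -/
theorem heat_implicitization_error_estimate
    {V W : Type*} [NormedAddCommGroup V] [InnerProductSpace ℝ V]
    [NormedAddCommGroup W] [InnerProductSpace ℝ W]
    (Vₕ : Submodule ℝ V) (G : V →ₗ[ℝ] W)
    (C h : ℝ) (hC : 0 < C) (hh : 0 < h)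
    (hinv : ∀ v ∈ Vₕ, ‖G v‖ ≤ (C / h) * ‖v‖)
    (Δt : ℝ) (hΔt : 0 < Δt)
    (e e' : V) (he : e ∈ Vₕ) (he' : e' ∈ Vₕ)
    (herr : ∀ v ∈ Vₕ, inner ℝ e v + Δt * inner ℝ (G e') (G v) = (0 : ℝ)) :
    (1 - C ^ 2 * Δt / (2 * h ^ 2)) * ‖e‖ ^ 2 ≤
      (C ^ 2 * Δt / (2 * h ^ 2)) * ‖e'‖ ^ 2 := by
  have key := herr e he
  have h1 : ‖e‖ ^ 2 = -(Δt * inner ℝ (G e') (G e)) := by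
    have : (inner ℝ e e : ℝ) = ‖e‖ ^ 2 := real_inner_self_eq_norm_sq e
    linarith [key, this]
  have h2 : (inner ℝ (G e') (G e) : ℝ) ≥ -(‖G e'‖ * ‖G e‖) := by
    have := abs_real_inner_le_norm (G e') (G e)
    have := abs_le.mp this
    linarith [this.1]
  have h3 : ‖e‖ ^ 2 ≤ Δt * (‖G e'‖ * ‖G e‖) := by
    rw [h1]
    nlinarith
  have h4 : ‖G e‖ ≤ (C / h) * ‖e‖ := hinv e he
  have h5 : ‖G e'‖ ≤ (C / h) * ‖e'‖ := hinv e' he'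
  have hge : (0:ℝ) ≤ ‖G e‖ := norm_nonneg _
  have hge' : (0:ℝ) ≤ ‖G e'‖ := norm_nonneg _
  have hne : (0:ℝ) ≤ ‖e‖ := norm_nonneg _
  have hne' : (0:ℝ) ≤ ‖e'‖ := norm_nonneg _
  have hCh : (0:ℝ) < C / h := div_pos hC hh
  have hmul : ‖G e'‖ * ‖G e‖ ≤ (C / h * ‖e'‖) * (C / h * ‖e‖) :=
    mul_le_mul h5 h4 hge (by positivity)
  have h6 : ‖e‖ ^ 2 ≤ Δt * ((C / h) ^ 2 * (‖e'‖ * ‖e‖)) := by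
    nlinarith [mul_le_mul_of_nonneg_left hmul hΔt.le]
  have h7 : ‖e'‖ * ‖e‖ ≤ (‖e'‖ ^ 2 + ‖e‖ ^ 2) / 2 := by nlinarith [sq_nonneg (‖e'‖ - ‖e‖)]
  have hh2 : (0:ℝ) < h ^ 2 := by positivity
  have hd : (C / h) ^ 2 = C ^ 2 / h ^ 2 := by field_simp
  rw [hd] at h6
  have hK0 : (0:ℝ) ≤ Δt * (C ^ 2 / h ^ 2) := by positivity
  have : ‖e‖ ^ 2 ≤ Δt * (C ^ 2 / h ^ 2) * ((‖e'‖ ^ 2 + ‖e‖ ^ 2) / 2) := by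
    nlinarith [mul_le_mul_of_nonneg_left h7 hK0]
  have hK : C ^ 2 * Δt / (2 * h ^ 2) = Δt * (C ^ 2 / h ^ 2) / 2 := by field_simp
  rw [hK]
  nlinarith
end

section
/- Let V and W be real inner product spaces, Vₕ ⊆ V a subspace, G : V →ₗ W linear with ‖G v‖ ≤ (C/h)·‖v‖ for all v ∈ Vₕ (C > 0, h > 0). Suppose the timestep satisfies the CFL-type condition Δt ≤ h²/C², and e, e' ∈ Vₕ satisfy ⟨e, v⟩ + Δt·⟨G e', G v⟩ = 0 for all v ∈ Vₕ. Then ‖e‖ ≤ ‖e'‖. -/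
/-- Under the CFL-type condition `Δt ≤ h²/C²`, the
implicitization iteration errors for the semidiscrete heat equation are
non-increasing: `‖e‖ ≤ ‖e'‖`. -/
theorem heat_implicitization_error_nonincreasing
    {V W : Type*} [NormedAddCommGroup V] [InnerProductSpace ℝ V]
    [NormedAddCommGroup W] [InnerProductSpace ℝ W]
    (Vₕ : Submodule ℝ V) (G : V →ₗ[ℝ] W)
    (C h : ℝ) (hC : 0 < C) (hh : 0 < h)
    (hinv : ∀ v ∈ Vₕ, ‖G v‖ ≤ (C / h) * ‖v‖)
    (Δt : ℝ) (hΔt : 0 < Δt) (hCFL : Δt ≤ h ^ 2 / C ^ 2)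
    (e e' : V) (he : e ∈ Vₕ) (he' : e' ∈ Vₕ)
    (herr : ∀ v ∈ Vₕ, inner ℝ e v + Δt * inner ℝ (G e') (G v) = (0 : ℝ)) :
    ‖e‖ ≤ ‖e'‖ := by
  rcases eq_or_ne e 0 with rfl | hne
  · simp [norm_nonneg]
  have hpos : 0 < ‖e‖ := norm_pos_iff.mpr hne
  have key := herr e he
  have h1 : ‖e‖ ^ 2 = -(Δt * inner ℝ (G e') (G e)) := by
    have := real_inner_self_eq_norm_sq e
    linarith [key, this]
  have h2 : ‖e‖ ^ 2 ≤ Δt * (‖G e'‖ * ‖G e‖) := by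
    rw [h1]
    have := abs_real_inner_le_norm (G e') (G e)
    nlinarith [neg_abs_le (inner ℝ (G e') (G e) : ℝ)]
  have h3 : Δt * (‖G e'‖ * ‖G e‖) ≤ Δt * ((C / h * ‖e'‖) * (C / h * ‖e‖)) := by
    apply mul_le_mul_of_nonneg_left _ hΔt.le
    exact mul_le_mul (hinv e' he') (hinv e he) (norm_nonneg _)
      (by positivity)
  have h4 : Δt * ((C / h * ‖e'‖) * (C / h * ‖e‖)) ≤ ‖e'‖ * ‖e‖ := by
    have hC2 : Δt * (C / h) ^ 2 ≤ 1 := by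
      calc Δt * (C / h) ^ 2 ≤ (h ^ 2 / C ^ 2) * (C / h) ^ 2 := by
            apply mul_le_mul_of_nonneg_right hCFL (by positivity)
        _ = 1 := by field_simp
    have : Δt * ((C / h * ‖e'‖) * (C / h * ‖e‖))
        = (Δt * (C / h) ^ 2) * (‖e'‖ * ‖e‖) := by ring
    rw [this]
    nlinarith [norm_nonneg e', norm_nonneg e, mul_nonneg (norm_nonneg e') (norm_nonneg e)]
  have : ‖e‖ ^ 2 ≤ ‖e'‖ * ‖e‖ := by linarith
  nlinarith
end

section
/- Let V and W be real inner product spaces, Vₕ ⊆ V a finite-dimensional subspace, G : V →ₗ W linear with ‖G v‖ ≤ (C/h)·‖v‖ for all v ∈ Vₕ (C > 0, h > 0), and let Δt > 0 satisfy Δt < h²/C². Let (eℓ)ℓ∈ℕ be a sequence in Vₕ such that ⟨e_{ℓ+1}, v⟩ + Δt·⟨G e_ℓ, G v⟩ = 0 for all v ∈ Vₕ and all ℓ. Then eℓ → 0 as ℓ → ∞. -/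
/-- Under the strict CFL-type condition `Δt < h²/C²`, the
implicitization iteration errors for the semidiscrete heat equation converge
to zero. -/
theorem heat_implicitization_errors_tendsto_zero
    {V W : Type*} [NormedAddCommGroup V] [InnerProductSpace ℝ V]
    [NormedAddCommGroup W] [InnerProductSpace ℝ W]
    (Vₕ : Submodule ℝ V) [FiniteDimensional ℝ Vₕ] (G : V →ₗ[ℝ] W)
    (C h : ℝ) (hC : 0 < C) (hh : 0 < h)
    (hinv : ∀ v ∈ Vₕ, ‖G v‖ ≤ (C / h) * ‖v‖)
    (Δt : ℝ) (hΔt : 0 < Δt) (hCFL : Δt < h ^ 2 / C ^ 2)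
    (e : ℕ → V) (he : ∀ ℓ, e ℓ ∈ Vₕ)
    (herr : ∀ ℓ, ∀ v ∈ Vₕ,
      inner ℝ (e (ℓ + 1)) v + Δt * inner ℝ (G (e ℓ)) (G v) = (0 : ℝ)) :
    Filter.Tendsto e Filter.atTop (nhds 0) := by
  set q : ℝ := Δt * (C / h) ^ 2 with hqdef
  have hq0 : 0 ≤ q := by positivity
  have hq1 : q < 1 := by
    have : Δt * (C ^ 2 / h ^ 2) < (h ^ 2 / C ^ 2) * (C ^ 2 / h ^ 2) := by
      apply mul_lt_mul_of_pos_right hCFL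
      positivity
    have h2 : (h ^ 2 / C ^ 2) * (C ^ 2 / h ^ 2) = 1 := by
      field_simp
    rw [hqdef, div_pow]
    linarith
  -- contraction step
  have hstep : ∀ ℓ, ‖e (ℓ + 1)‖ ≤ q * ‖e ℓ‖ := by
    intro ℓ
    have key := herr ℓ (e (ℓ + 1)) (he (ℓ + 1))
    have hsq : ‖e (ℓ + 1)‖ ^ 2 = - (Δt * inner ℝ (G (e ℓ)) (G (e (ℓ + 1)))) := by
      rw [← real_inner_self_eq_norm_sq]
      linarith [key]
    have hcs : inner ℝ (G (e ℓ)) (G (e (ℓ + 1))) ≥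
        -(‖G (e ℓ)‖ * ‖G (e (ℓ + 1))‖) := by
      have := abs_real_inner_le_norm (G (e ℓ)) (G (e (ℓ + 1)))
      have := neg_abs_le (inner ℝ (G (e ℓ)) (G (e (ℓ + 1))) : ℝ)
      linarith
    have h1 : ‖e (ℓ + 1)‖ ^ 2 ≤ Δt * (‖G (e ℓ)‖ * ‖G (e (ℓ + 1))‖) := by
      rw [hsq]
      nlinarith
    have hG1 : ‖G (e ℓ)‖ ≤ (C / h) * ‖e ℓ‖ := hinv _ (he ℓ)
    have hG2 : ‖G (e (ℓ + 1))‖ ≤ (C / h) * ‖e (ℓ + 1)‖ := hinv _ (he (ℓ + 1))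
    have hCh : 0 ≤ C / h := by positivity
    have h2 : ‖e (ℓ + 1)‖ ^ 2 ≤ q * ‖e ℓ‖ * ‖e (ℓ + 1)‖ := by
      have hGn1 : 0 ≤ ‖G (e ℓ)‖ := norm_nonneg _
      have hGn2 : 0 ≤ ‖G (e (ℓ + 1))‖ := norm_nonneg _
      have hprod : ‖G (e ℓ)‖ * ‖G (e (ℓ + 1))‖ ≤
          (C / h * ‖e ℓ‖) * (C / h * ‖e (ℓ + 1)‖) :=
        mul_le_mul hG1 hG2 hGn2 (by positivity)
      have : Δt * (‖G (e ℓ)‖ * ‖G (e (ℓ + 1))‖) ≤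
          Δt * ((C / h * ‖e ℓ‖) * (C / h * ‖e (ℓ + 1)‖)) :=
        mul_le_mul_of_nonneg_left hprod hΔt.le
      calc ‖e (ℓ + 1)‖ ^ 2 ≤ Δt * ((C / h * ‖e ℓ‖) * (C / h * ‖e (ℓ + 1)‖)) := by
            linarith
        _ = q * ‖e ℓ‖ * ‖e (ℓ + 1)‖ := by rw [hqdef]; ring
    rcases eq_or_lt_of_le (norm_nonneg (e (ℓ + 1))) with hz | hz
    · rw [← hz]; positivity
    · have := (mul_le_mul_iff_of_pos_right hz).mp (by nlinarith : ‖e (ℓ+1)‖ * ‖e (ℓ+1)‖ ≤ (q * ‖e ℓ‖) * ‖e (ℓ+1)‖)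
      linarith
  -- geometric bound
  have hbound : ∀ ℓ, ‖e ℓ‖ ≤ q ^ ℓ * ‖e 0‖ := by
    intro ℓ
    induction ℓ with
    | zero => simp
    | succ n ih =>
      calc ‖e (n + 1)‖ ≤ q * ‖e n‖ := hstep n
        _ ≤ q * (q ^ n * ‖e 0‖) := by
            apply mul_le_mul_of_nonneg_left ih hq0
        _ = q ^ (n + 1) * ‖e 0‖ := by ring
  rw [tendsto_iff_norm_sub_tendsto_zero]
  simp only [sub_zero]
  apply squeeze_zero (fun n => norm_nonneg _) hbound
  have : Filter.Tendsto (fun n : ℕ => q ^ n) Filter.atTop (nhds 0) :=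
    tendsto_pow_atTop_nhds_zero_of_lt_one hq0 hq1
  simpa using this.mul_const ‖e 0‖
end
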